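/- arXiv:1903.08379 — 3 statements merged into one kernel-verified Lean document; each statement's English description precedes it below -/
import Mathlib

section
/- For all n ≥ 1 and m ≥ 0, the number of (m+1)-th order partitions of an n-element set satisfies |℘_n^(m+1)| = Σ_{k=1}^n |℘_k^(m)| · S(n,k), where S(n,k) is the ordinary Stirling number of the second kind and |℘_k^(0)| = 1. -/
open Finset

variable {α β : Type} [DecidableEq α] [DecidableEq β]

theorem mapEmbedding_toEmbedding_apply (f : α ↪ β) (b : Finset α) :
    (Finset.mapEmbedding f).toEmbedding b = b.map f := rfl

/-- Push forward a finpartition of a finset along an embedding. -/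
def Finpartition.mapEmb (f : α ↪ β) {s : Finset α} (P : Finpartition s) :
    Finpartition (s.map f) where
  parts := P.parts.map (Finset.mapEmbedding f).toEmbedding
  supIndep := by
    rw [Finset.supIndep_iff_pairwiseDisjoint]
    rintro a ha b hb hab
    simp only [Finset.mem_coe, Finset.mem_map, mapEmbedding_toEmbedding_apply] at ha hb
    obtain ⟨a', ha', rfl⟩ := ha
    obtain ⟨b', hb', rfl⟩ := hb
    have hne : a' ≠ b' := by rintro rfl; exact hab rfl
    have hd := P.supIndep.pairwiseDisjoint ha' hb' hne
    simp only [Function.onFun, id] at hd ⊢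
    exact (Finset.disjoint_map f).2 hd
  sup_parts := by
    ext x
    simp only [Finset.mem_sup, Finset.mem_map, mapEmbedding_toEmbedding_apply]
    constructor
    · rintro ⟨_, ⟨b, hb, rfl⟩, hx⟩
      rw [id, Finset.mem_map] at hx
      obtain ⟨y, hy, rfl⟩ := hx
      exact ⟨y, by rw [← P.sup_parts]; exact Finset.mem_sup.2 ⟨b, hb, hy⟩, rfl⟩
    · rintro ⟨y, hy, rfl⟩
      rw [← P.sup_parts, Finset.mem_sup] at hy
      obtain ⟨b, hb, hy⟩ := hy
      exact ⟨b.map f, ⟨b, hb, rfl⟩, Finset.mem_map_of_mem f hy⟩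
  bot_notMem := by
    simp only [Finset.bot_eq_empty, Finset.mem_map, mapEmbedding_toEmbedding_apply]
    rintro ⟨b, hb, h⟩
    rw [Finset.map_eq_empty] at h
    subst h
    exact P.bot_notMem hb

theorem Finpartition.mapEmb_parts (f : α ↪ β) {s : Finset α} (P : Finpartition s) :
    (P.mapEmb f).parts = P.parts.map (Finset.mapEmbedding f).toEmbedding := rfl

theorem Finpartition.mapEmb_bijective (f : α ↪ β) (s : Finset α) :
    Function.Bijective (Finpartition.mapEmb f (s := s)) := by
  constructor
  · intro P Q h
    have : P.parts.map (Finset.mapEmbedding f).toEmbedding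
        = Q.parts.map (Finset.mapEmbedding f).toEmbedding :=
      congrArg Finpartition.parts h
    exact Finpartition.ext (Finset.map_injective _ this)
  · intro Q
    classical
    have hsub : ∀ b ∈ Q.parts, b ⊆ s.map f := fun b hb => Q.le hb
    have hrng : ∀ b ∈ Q.parts, ∀ x ∈ b, x ∈ Set.range f := by
      intro b hb x hx
      obtain ⟨a, _, rfl⟩ := Finset.mem_map.1 (hsub b hb hx)
      exact ⟨a, rfl⟩
    have hinj : ∀ b : Finset β, Set.InjOn f (f ⁻¹' ↑b) := fun b => f.injective.injOn
    set pre : Finset β → Finset α := fun b => b.preimage f (hinj b) with hpre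
    have hmem : ∀ b x, x ∈ pre b ↔ f x ∈ b := by
      intro b x; rw [hpre]; exact Finset.mem_preimage
    have hmp : ∀ b ∈ Q.parts, (pre b).map f = b := by
      intro b hb
      rw [Finset.map_eq_image, hpre]
      simp only
      rw [Finset.image_preimage]
      exact Finset.filter_true_of_mem (hrng b hb)
    refine ⟨⟨Q.parts.image pre, ?_, ?_, ?_⟩, ?_⟩
    · rw [Finset.supIndep_iff_pairwiseDisjoint]
      rintro a ha b hb hab
      simp only [Finset.mem_coe, Finset.mem_image] at ha hb
      obtain ⟨a', ha', rfl⟩ := ha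
      obtain ⟨b', hb', rfl⟩ := hb
      have hne : a' ≠ b' := by rintro rfl; exact hab rfl
      have hd := Q.supIndep.pairwiseDisjoint ha' hb' hne
      simp only [Function.onFun, id] at hd ⊢
      rw [Finset.disjoint_left] at hd ⊢
      intro x hx hx'
      exact hd ((hmem _ _).1 hx) ((hmem _ _).1 hx')
    · ext x
      simp only [Finset.mem_sup, Finset.mem_image]
      constructor
      · rintro ⟨_, ⟨b, hb, rfl⟩, hx⟩
        rw [id] at hx
        have h1 : f x ∈ b := (hmem _ _).1 hx
        have h2 : f x ∈ s.map f := hsub b hb h1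
        obtain ⟨y, hy, hxy⟩ := Finset.mem_map.1 h2
        rwa [← f.injective hxy]
      · intro hx
        have h2 : f x ∈ s.map f := Finset.mem_map_of_mem f hx
        rw [← Q.sup_parts, Finset.mem_sup] at h2
        obtain ⟨b, hb, hfb⟩ := h2
        exact ⟨pre b, ⟨b, hb, rfl⟩, (hmem _ _).2 hfb⟩
    · simp only [Finset.bot_eq_empty, Finset.mem_image]
      rintro ⟨b, hb, h⟩
      apply Q.bot_notMem
      have h2 := hmp b hb
      rw [h, Finset.map_empty] at h2
      rwa [← h2] at hb
    · apply Finpartition.ext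
      rw [Finpartition.mapEmb_parts]
      ext b
      simp only [Finset.mem_map, Finset.mem_image, mapEmbedding_toEmbedding_apply]
      constructor
      · rintro ⟨_, ⟨c, hc, rfl⟩, rfl⟩
        rw [hmp c hc]
        exact hc
      · intro hb
        exact ⟨pre b, ⟨b, hb, rfl⟩, hmp b hb⟩

/-- The equivalence of finpartitions along an embedding. -/
noncomputable def Finpartition.mapEmbEquiv (f : α ↪ β) (s : Finset α) :
    Finpartition s ≃ Finpartition (s.map f) :=
  Equiv.ofBijective _ (Finpartition.mapEmb_bijective f s)




/-- `m`-th order ("hyper") partitions of a finite set `s`: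
a chain `(P₁, …, P_m)` where `P₁` is a partition of `s` and each `P_{j+1}`
is a partition of the set of blocks of `P_j`. For `m = 0` it is `s` itself
(a single trivial object). -/
def HyperPartition : (m : ℕ) → {α : Type} → [DecidableEq α] → Finset α → Type
  | 0, _, _, _ => PUnit
  | m + 1, _, _, s => (P : Finpartition s) × HyperPartition m P.parts

/-- The number of blocks of the outermost partition of a hyper partition
(for `m = 0`, by convention, the cardinality of the underlying set). -/
def HyperPartition.outerBlocks :
    (m : ℕ) → {α : Type} → [DecidableEq α] → {s : Finset α} →
      HyperPartition m s → ℕ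
  | 0, _, _, s, _ => s.card
  | 1, _, _, _, p => p.1.parts.card
  | m + 2, _, _, _, p => HyperPartition.outerBlocks (m + 1) p.2

/-- `|℘ₙ^(m)|`: the number of `m`-th order partitions of an `n`-element set. -/
noncomputable def hyperBell (m n : ℕ) : ℕ :=
  Nat.card (HyperPartition m (Finset.univ : Finset (Fin n)))

/-- The `m`-th order Stirling number `S^(m)(n,k)`: the number of `m`-th order
partitions of an `n`-element set whose outermost partition has exactly `k` blocks. -/
noncomputable def hyperStirling (m n k : ℕ) : ℕ :=
  Nat.card {p : HyperPartition m (Finset.univ : Finset (Fin n)) //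
    HyperPartition.outerBlocks m p = k}

/-- The ordinary Stirling number of the second kind `S(n,k)`: the number of
set partitions of an `n`-element set into exactly `k` blocks. -/
noncomputable def stirling (n k : ℕ) : ℕ :=
  Nat.card {P : Finpartition (Finset.univ : Finset (Fin n)) // P.parts.card = k}

/-- Composition `f(g(x))` of formal power series (intended for `g` with zero
constant term, in which case `coeff n (g ^ i) = 0` for `i > n`). -/
noncomputable def psComp (f g : PowerSeries ℚ) : PowerSeries ℚ :=
  PowerSeries.mk fun n =>
    PowerSeries.coeff n
      (∑ i ∈ Finset.range (n + 1), PowerSeries.C (PowerSeries.coeff i f) * g ^ i)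

/-- The iterated exponential series: `E₀ = exp x`, `E_{m+1} = exp (E_m - 1)`. -/
noncomputable def E : ℕ → PowerSeries ℚ
  | 0 => PowerSeries.exp ℚ
  | m + 1 => psComp (PowerSeries.exp ℚ) (E m - 1)

/-- The `m`-th order Bell number `Bₙ^(m) = n! · [xⁿ] E_m(x)`. -/
noncomputable def bell (m n : ℕ) : ℚ :=
  (n.factorial : ℚ) * PowerSeries.coeff n (E m)


noncomputable instance hpFintype : ∀ (m : ℕ) {α : Type} [DecidableEq α] (s : Finset α),
    Fintype (HyperPartition m s)
  | 0, _, _, _ => inferInstanceAs (Fintype PUnit)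
  | m + 1, α, _, s =>
    letI : ∀ P : Finpartition s, Fintype (HyperPartition m P.parts) :=
      fun P => hpFintype m P.parts
    inferInstanceAs (Fintype ((P : Finpartition s) × HyperPartition m P.parts))

/-- Hyper partitions transported along an embedding. -/
noncomputable def hpEquiv : (m : ℕ) → {α β : Type} → [DecidableEq α] → [DecidableEq β] →
    (f : α ↪ β) → (s : Finset α) → HyperPartition m s ≃ HyperPartition m (s.map f)
  | 0, _, _, _, _, _, _ => Equiv.refl PUnit
  | m + 1, α, β, _, _, f, s =>
    Equiv.sigmaCongr (Finpartition.mapEmbEquiv f s)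
      (fun P => hpEquiv m (Finset.mapEmbedding f).toEmbedding P.parts)

theorem hyperCard (m : ℕ) {α : Type} [DecidableEq α] (s : Finset α) :
    Nat.card (HyperPartition m s) = hyperBell m s.card := by
  classical
  have h1 : s.attach.map (Function.Embedding.subtype (· ∈ s)) = s := Finset.attach_map_val
  have e1 : HyperPartition m s.attach ≃ HyperPartition m s :=
    (hpEquiv m (Function.Embedding.subtype (· ∈ s)) s.attach).trans (Equiv.cast (by rw [h1]))
  have h2 : (Finset.univ : Finset {x // x ∈ s}).map s.equivFin.toEmbedding
      = (Finset.univ : Finset (Fin s.card)) := Finset.map_univ_equiv _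
  have h3 : s.attach = (Finset.univ : Finset {x // x ∈ s}) := rfl
  have e2 : HyperPartition m s.attach ≃ HyperPartition m (Finset.univ : Finset (Fin s.card)) := by
    rw [h3]
    exact (hpEquiv m s.equivFin.toEmbedding Finset.univ).trans (Equiv.cast (by rw [h2]))
  rw [hyperBell, ← Nat.card_congr e1, Nat.card_congr e2]

/-- `|℘ₙ^(m+1)| = Σ_{k=1}^n |℘ₖ^(m)| · S(n,k)` (and `|℘ₖ^(0)| = 1` holds
by definition of `HyperPartition`). -/
theorem stmt0 (n : ℕ) (hn : 1 ≤ n) (m : ℕ) :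
    hyperBell (m + 1) n = ∑ k ∈ Finset.Icc 1 n, hyperBell m k * stirling n k := by
  classical
  have hsig : hyperBell (m + 1) n
      = ∑ P : Finpartition (Finset.univ : Finset (Fin n)), Nat.card (HyperPartition m P.parts) := by
    rw [hyperBell, show HyperPartition (m + 1) (Finset.univ : Finset (Fin n))
        = ((P : Finpartition (Finset.univ : Finset (Fin n))) × HyperPartition m P.parts) from rfl,
      Nat.card_eq_fintype_card, Fintype.card_sigma]
    simp [Nat.card_eq_fintype_card]
  rw [hsig]
  have hmaps : ∀ P : Finpartition (Finset.univ : Finset (Fin n)),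
      P ∈ (Finset.univ : Finset (Finpartition (Finset.univ : Finset (Fin n)))) →
      P.parts.card ∈ Finset.Icc 1 n := by
    intro P _
    rw [Finset.mem_Icc]
    constructor
    · have hne : (Finset.univ : Finset (Fin n)) ≠ ⊥ := by
        have : Nonempty (Fin n) := ⟨⟨0, hn⟩⟩
        simpa [Finset.bot_eq_empty] using (Finset.univ_nonempty).ne_empty
      have := P.parts_nonempty hne
      exact Finset.card_pos.2 this
    · have := P.card_parts_le_card
      simpa using this
  rw [← Finset.sum_fiberwise_of_maps_to hmaps (fun P => Nat.card (HyperPartition m P.parts))]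
  refine Finset.sum_congr rfl fun k _ => ?_
  have hst : stirling n k
      = (Finset.univ.filter
          (fun P : Finpartition (Finset.univ : Finset (Fin n)) => P.parts.card = k)).card := by
    rw [stirling, Nat.card_eq_fintype_card, Fintype.card_subtype]
  rw [hst]
  rw [Finset.sum_congr rfl (fun P hP => ?_)]
  · rw [Finset.sum_const, smul_eq_mul, mul_comm]
  · rw [Finset.mem_filter] at hP
    rw [hyperCard m P.parts, hP.2]
end

section
/- For all m ≥ 1 and k ≥ 1, the exponential generating function of the sequence (S^(m)(n,k))_{n≥k} equals (E_{m−1}(x) − 1)^k / k! as a formal power series over ℚ; that is, Σ_{n≥k} S^(m)(n,k) · x^n/n! = (E_{m−1}(x) − 1)^k / k!. In other words, the set-theoretically defined m-th order Stirling numbers coincide with Bell's generalized Stirling numbers ζ_n^(k,m) defined by these generating functions. -/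
open PowerSeries Finset

noncomputable section

lemma coeff_pow_zero_of_lt {g : PowerSeries ℚ} (hg : constantCoeff g = 0)
    {i n : ℕ} (h : n < i) : coeff n (g ^ i) = 0 := by
  have hd : (X : PowerSeries ℚ) ^ i ∣ g ^ i :=
    pow_dvd_pow_of_dvd (X_dvd_iff.2 hg) i
  exact (X_pow_dvd_iff.1 hd) n h

lemma coeff_psComp (f g : PowerSeries ℚ) (n : ℕ) :
    coeff n (psComp f g) =
      ∑ i ∈ range (n + 1), coeff i f * coeff n (g ^ i) := by
  simp [psComp, coeff_mk, coeff_C_mul]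

/-- truncated polynomial -/
noncomputable def ptrunc (f : PowerSeries ℚ) (N : ℕ) : Polynomial ℚ :=
  ∑ i ∈ range N, Polynomial.C (coeff i f) * Polynomial.X ^ i

lemma ptrunc_coeff (f : PowerSeries ℚ) {N i : ℕ} (h : i < N) :
    (ptrunc f N).coeff i = coeff i f := by
  simp [ptrunc, Polynomial.coeff_X_pow, Polynomial.finset_sum_coeff]
  simp [Finset.sum_ite_eq' (range N) i, h]

lemma ptrunc_coeff' (f : PowerSeries ℚ) {N i : ℕ} (h : N ≤ i) :
    (ptrunc f N).coeff i = 0 := by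
  simp [ptrunc, Polynomial.coeff_X_pow, Polynomial.finset_sum_coeff]
  simp [Finset.sum_ite_eq' (range N) i, Nat.not_lt.2 h]

lemma coeff_aeval_congr {g : PowerSeries ℚ} (hg : constantCoeff g = 0)
    {n : ℕ} {p q : Polynomial ℚ} (h : ∀ i ≤ n, p.coeff i = q.coeff i) :
    coeff n (Polynomial.aeval g p) = coeff n (Polynomial.aeval g q) := by
  have hdvd : (Polynomial.X : Polynomial ℚ) ^ (n + 1) ∣ p - q := by
    rw [Polynomial.X_pow_dvd_iff]
    intro d hd
    simp [h d (Nat.lt_succ_iff.1 hd)]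
  obtain ⟨r, hr⟩ := hdvd
  have hpq : p = q + Polynomial.X ^ (n+1) * r := by linear_combination hr
  rw [hpq, map_add, map_mul, map_pow, Polynomial.aeval_X, map_add]
  have : coeff n (g ^ (n+1) * Polynomial.aeval g r) = 0 := by
    have hd : (X : PowerSeries ℚ) ^ (n+1) ∣ g ^ (n+1) * Polynomial.aeval g r :=
      Dvd.dvd.mul_right (pow_dvd_pow_of_dvd (X_dvd_iff.2 hg) _) _
    exact (X_pow_dvd_iff.1 hd) n (Nat.lt_succ_self n)
  simp [this]

lemma coeff_psComp_aeval (f g : PowerSeries ℚ) {n N : ℕ} (hg : constantCoeff g = 0)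
    (hN : n < N) :
    coeff n (psComp f g) = coeff n (Polynomial.aeval g (ptrunc f N)) := by
  have h1 : coeff n (Polynomial.aeval g (ptrunc f N))
      = coeff n (Polynomial.aeval g (ptrunc f (n+1))) := by
    apply coeff_aeval_congr hg
    intro i hi
    rw [ptrunc_coeff f (lt_of_le_of_lt hi hN), ptrunc_coeff f (Nat.lt_succ_of_le hi)]
  rw [h1, coeff_psComp]
  simp only [ptrunc, map_sum, map_mul, map_pow, Polynomial.aeval_X, Polynomial.aeval_C]
  refine Finset.sum_congr rfl fun i _ => ?_
  rw [show (algebraMap ℚ (PowerSeries ℚ)) ((coeff i) f) = PowerSeries.C ((coeff i) f) from rfl,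
    PowerSeries.coeff_C_mul]

end
lemma coeff_psComp_ext {g : PowerSeries ℚ} (f : PowerSeries ℚ)
    (hg : constantCoeff g = 0) {n N : ℕ} (hN : n < N) :
    coeff n (psComp f g) = ∑ i ∈ range N, coeff i f * coeff n (g ^ i) := by
  rw [coeff_psComp]
  apply Finset.sum_subset
  · intro x hx
    simp only [Finset.mem_range] at *; omega
  · intro x _ hx
    simp only [Finset.mem_range, not_lt] at hx
    rw [coeff_pow_zero_of_lt hg (by omega), mul_zero]

lemma psComp_C (a : ℚ) (g : PowerSeries ℚ) : psComp (PowerSeries.C a) g = PowerSeries.C a := by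
  ext n
  rw [coeff_psComp]
  rw [Finset.sum_eq_single 0]
  · simp [PowerSeries.coeff_C]
  · intro i _ hi
    simp [PowerSeries.coeff_C, hi]
  · simp

lemma psComp_one (g : PowerSeries ℚ) : psComp 1 g = 1 := by
  have := psComp_C 1 g; simpa using this

lemma psComp_add (f₁ f₂ g : PowerSeries ℚ) :
    psComp (f₁ + f₂) g = psComp f₁ g + psComp f₂ g := by
  ext n
  simp [coeff_psComp, add_mul, Finset.sum_add_distrib]

lemma psComp_sub (f₁ f₂ g : PowerSeries ℚ) :
    psComp (f₁ - f₂) g = psComp f₁ g - psComp f₂ g := by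
  ext n
  simp [coeff_psComp, sub_mul, Finset.sum_sub_distrib]

lemma psComp_mul {g : PowerSeries ℚ} (hg : constantCoeff g = 0) (f₁ f₂ : PowerSeries ℚ) :
    psComp (f₁ * f₂) g = psComp f₁ g * psComp f₂ g := by
  ext n
  rw [coeff_psComp_aeval _ _ hg (Nat.lt_succ_self n)]
  have hcongr : coeff n (Polynomial.aeval g (ptrunc (f₁ * f₂) (n+1)))
      = coeff n (Polynomial.aeval g (ptrunc f₁ (n+1) * ptrunc f₂ (n+1))) := by
    apply coeff_aeval_congr hg
    intro i hi
    rw [ptrunc_coeff _ (Nat.lt_succ_of_le hi), Polynomial.coeff_mul, PowerSeries.coeff_mul]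
    apply Finset.sum_congr rfl
    intro p hp
    rw [Finset.HasAntidiagonal.mem_antidiagonal] at hp
    rw [ptrunc_coeff _ (by omega), ptrunc_coeff _ (by omega)]
  rw [hcongr, map_mul, PowerSeries.coeff_mul, PowerSeries.coeff_mul]
  apply Finset.sum_congr rfl
  intro p hp
  rw [Finset.HasAntidiagonal.mem_antidiagonal] at hp
  rw [← coeff_psComp_aeval _ _ hg (by omega), ← coeff_psComp_aeval _ _ hg (by omega)]

lemma psComp_pow {g : PowerSeries ℚ} (hg : constantCoeff g = 0) (f : PowerSeries ℚ) (k : ℕ) :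
    psComp (f ^ k) g = (psComp f g) ^ k := by
  induction k with
  | zero => simpa using psComp_one g
  | succ k ih => rw [pow_succ, psComp_mul hg, ih, pow_succ]

lemma constantCoeff_psComp (f g : PowerSeries ℚ) :
    constantCoeff (psComp f g) = constantCoeff f * constantCoeff g ^ 0 := by
  have := coeff_psComp f g 0
  rw [← coeff_zero_eq_constantCoeff] at *
  simpa using this

lemma psComp_assoc {f g h : PowerSeries ℚ} (hg : constantCoeff g = 0)
    (hh : constantCoeff h = 0) :
    psComp (psComp f g) h = psComp f (psComp g h) := by
  ext n
  rw [coeff_psComp]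
  have lhs : ∀ i ∈ range (n+1), coeff i (psComp f g) * coeff n (h ^ i)
      = ∑ j ∈ range (n+1), coeff j f * coeff i (g ^ j) * coeff n (h ^ i) := by
    intro i hi
    rw [Finset.mem_range] at hi
    rw [coeff_psComp_ext f hg hi, Finset.sum_mul]
  rw [Finset.sum_congr rfl lhs, coeff_psComp]
  rw [Finset.sum_comm]
  apply Finset.sum_congr rfl
  intro j _
  rw [← psComp_pow hh, coeff_psComp]
  rw [Finset.mul_sum]
  apply Finset.sum_congr rfl
  intro i _
  ring

lemma constantCoeff_E (m : ℕ) : constantCoeff (E m) = 1 := by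
  cases m with
  | zero => exact PowerSeries.constantCoeff_exp (A := ℚ)
  | succ m =>
      show constantCoeff (psComp (PowerSeries.exp ℚ) (E m - 1)) = 1
      rw [constantCoeff_psComp]
      simp [PowerSeries.constantCoeff_exp]

lemma constantCoeff_E_sub_one (m : ℕ) : constantCoeff (E m - 1) = 0 := by
  rw [map_sub, constantCoeff_E]; simp

lemma constantCoeff_exp_sub_one : constantCoeff (PowerSeries.exp ℚ - 1) = 0 := by
  rw [map_sub, PowerSeries.constantCoeff_exp (A := ℚ)]; simp

lemma E_succ_sub_one (m : ℕ) :
    E (m + 1) - 1 = psComp (PowerSeries.exp ℚ - 1) (E m - 1) := by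
  show psComp (PowerSeries.exp ℚ) (E m - 1) - 1 = _
  rw [psComp_sub, psComp_one]

lemma E_comm (m : ℕ) :
    E (m + 1) - 1 = psComp (E m - 1) (PowerSeries.exp ℚ - 1) := by
  induction m with
  | zero => rw [E_succ_sub_one]; rfl
  | succ m ih =>
      rw [E_succ_sub_one, ih, ← psComp_assoc (constantCoeff_E_sub_one m)
        constantCoeff_exp_sub_one]
      rw [show psComp (PowerSeries.exp ℚ - 1) (E m - 1) = E (m+1) - 1 from (E_succ_sub_one m).symm,
        ih]

lemma E_pow_key (m k : ℕ) :
    (E (m + 1) - 1) ^ k = psComp ((E m - 1) ^ k) (PowerSeries.exp ℚ - 1) := by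
  rw [E_comm, ← psComp_pow constantCoeff_exp_sub_one]
/-- Ordered tuples of disjoint nonempty finsets covering `s`. -/
def OrdTuple {α : Type} [DecidableEq α] (k : ℕ) (s : Finset α) : Type :=
  {A : Fin k → Finset α // (∀ i, (A i).Nonempty) ∧
    (Pairwise fun i j => Disjoint (A i) (A j)) ∧ Finset.univ.sup A = s}

lemma natCard_sigma {ι : Type*} [Fintype ι] (f : ι → Type*) [∀ i, Finite (f i)] :
    Nat.card (Σ i, f i) = ∑ i, Nat.card (f i) := by
  letI : ∀ i, Fintype (f i) := fun i => Fintype.ofFinite _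
  simp [Nat.card_eq_fintype_card]

lemma natCard_plift (P : Prop) [Decidable P] : Nat.card (PLift P) = if P then 1 else 0 := by
  by_cases h : P
  · haveI : Unique (PLift P) := ⟨⟨⟨h⟩⟩, fun a => rfl⟩
    simp [Nat.card_unique, h]
  · haveI : IsEmpty (PLift P) := ⟨fun a => h a.down⟩
    simp [Nat.card_of_isEmpty, h]

section OrdTuple
variable {α : Type} [DecidableEq α]

lemma sup_univ_succ' {k : ℕ} (A : Fin (k+1) → Finset α) :
    Finset.univ.sup A = A 0 ∪ Finset.univ.sup (fun i : Fin k => A i.succ) := by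
  ext x
  rw [Finset.mem_union, Finset.mem_sup, Finset.mem_sup]
  constructor
  · rintro ⟨i, _, hi⟩
    rcases Fin.eq_zero_or_eq_succ i with rfl | ⟨j, rfl⟩
    · exact Or.inl hi
    · exact Or.inr ⟨j, Finset.mem_univ j, hi⟩
  · rintro (h | ⟨j, _, hj⟩)
    · exact ⟨0, Finset.mem_univ _, h⟩
    · exact ⟨j.succ, Finset.mem_univ _, hj⟩

def ordTupleSuccEquiv (k : ℕ) (s : Finset α) :
    OrdTuple (k+1) s ≃
      Σ b : {b : Finset α // b ∈ s.powerset}, (PLift b.1.Nonempty × OrdTuple k (s \ b.1)) where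
  toFun A := by
    obtain ⟨A, h1, h2, h3⟩ := A
    have hsub : A 0 ⊆ s := by
      rw [← h3]; exact Finset.le_sup (f := A) (Finset.mem_univ (0 : Fin (k+1)))
    have hdisj : Disjoint (A 0) (Finset.univ.sup fun i : Fin k => A i.succ) := by
      rw [Finset.disjoint_sup_right]
      intro i _
      exact h2 (Fin.succ_ne_zero i).symm
    refine ⟨⟨A 0, Finset.mem_powerset.2 hsub⟩, ⟨h1 0⟩,
      ⟨fun i => A i.succ, fun i => h1 i.succ,
        fun i j hij => h2 (fun hc => hij (Fin.succ_injective k hc)), ?_⟩⟩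
    show (Finset.univ.sup fun i : Fin k => A i.succ) = s \ A 0
    have hs : s = A 0 ∪ Finset.univ.sup (fun i : Fin k => A i.succ) := by
      rw [← h3]; exact sup_univ_succ' A
    rw [hs, Finset.union_sdiff_cancel_left hdisj]
  invFun x := by
    obtain ⟨⟨b, hb⟩, ⟨hbne⟩, ⟨A', h1, h2, h3⟩⟩ := x
    have hbs : b ⊆ s := Finset.mem_powerset.1 hb
    have hsub' : ∀ i, A' i ⊆ s \ b := fun i => by
      rw [← h3]; exact Finset.le_sup (f := A') (Finset.mem_univ i)
    refine ⟨Fin.cons b A', ?_, ?_, ?_⟩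
    · intro i
      refine Fin.cases ?_ ?_ i
      · exact hbne
      · intro j; exact h1 j
    · intro i j hij
      rcases Fin.eq_zero_or_eq_succ i with rfl | ⟨i', rfl⟩ <;>
        rcases Fin.eq_zero_or_eq_succ j with rfl | ⟨j', rfl⟩
      · exact absurd rfl hij
      · simp only [Fin.cons_zero, Fin.cons_succ]
        exact Finset.disjoint_of_subset_right (hsub' j') Finset.disjoint_sdiff
      · simp only [Fin.cons_zero, Fin.cons_succ]
        exact Finset.disjoint_of_subset_left (hsub' i') Finset.sdiff_disjoint
      · simp only [Fin.cons_succ]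
        exact h2 (fun hc => hij (congrArg Fin.succ hc))
    · rw [sup_univ_succ']
      simp only [Fin.cons_zero, Fin.cons_succ]
      rw [show (Finset.univ.sup fun i : Fin k => A' i) = s \ b from h3]
      exact Finset.union_sdiff_of_subset hbs
  left_inv := by
    rintro ⟨A, h1, h2, h3⟩
    apply Subtype.ext
    exact Fin.cons_self_tail A
  right_inv := by
    rintro ⟨⟨b, hb⟩, ⟨hbne⟩, ⟨A', h1, h2, h3⟩⟩
    rfl

instance ordTupleFinite [Fintype α] (k : ℕ) (s : Finset α) : Finite (OrdTuple k s) := by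
  unfold OrdTuple; infer_instance

lemma card_ordTuple [Fintype α] (k : ℕ) (s : Finset α) :
    (Nat.card (OrdTuple k s) : ℚ) =
      (s.card.factorial : ℚ) *
        PowerSeries.coeff s.card ((PowerSeries.exp ℚ - 1) ^ k) := by
  induction k generalizing s with
  | zero =>
      by_cases hs : s = ∅
      · subst hs
        haveI : Unique (OrdTuple 0 (∅ : Finset α)) :=
          { default := ⟨fun i => i.elim0, fun i => i.elim0, fun i => i.elim0, by simp⟩
            uniq := fun a => Subtype.ext (funext fun i => i.elim0) }
        rw [Nat.card_unique]
        simp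
      · haveI : IsEmpty (OrdTuple 0 s) := ⟨by
          rintro ⟨A, h1, h2, h3⟩
          exact hs (by simpa using h3.symm)⟩
        rw [Nat.card_of_isEmpty]
        have : s.card ≠ 0 := by simpa [Finset.card_eq_zero] using hs
        simp [PowerSeries.coeff_one, this]
  | succ k ih =>
      set G : ℕ → ℚ := fun c => (if c = 0 then 0 else 1) *
        (((s.card - c).factorial : ℚ) *
          PowerSeries.coeff (s.card - c) ((PowerSeries.exp ℚ - 1) ^ k)) with hG
      rw [Nat.card_congr (ordTupleSuccEquiv k s), natCard_sigma]
      push_cast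
      rw [Finset.sum_coe_sort s.powerset
        (fun b => ((Nat.card (PLift b.Nonempty × OrdTuple k (s \ b)) : ℚ)))]
      have hterm : ∀ b ∈ s.powerset,
          ((Nat.card (PLift b.Nonempty × OrdTuple k (s \ b)) : ℚ)) = G b.card := by
        intro b hb
        rw [Finset.mem_powerset] at hb
        rw [Nat.card_prod, natCard_plift, hG]
        push_cast
        rw [ih (s \ b), Finset.card_sdiff_of_subset hb]
        congr 1
        by_cases hbe : b.Nonempty
        · rw [if_pos hbe,
            if_neg (by simpa [Finset.card_eq_zero, ← Finset.nonempty_iff_ne_empty] using hbe)]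
        · rw [if_neg hbe,
            if_pos (by simpa [Finset.card_eq_zero, Finset.not_nonempty_iff_eq_empty] using hbe)]
      rw [Finset.sum_congr rfl hterm, Finset.sum_powerset s (fun b => G b.card)]
      have hinner : ∀ j ∈ Finset.range (s.card + 1),
          (∑ t ∈ Finset.powersetCard j s, G t.card) = (s.card.choose j : ℚ) * G j := by
        intro j _
        rw [Finset.sum_powersetCard j s G, nsmul_eq_mul]
      rw [Finset.sum_congr rfl hinner]
      -- now the power series side
      rw [pow_succ' (PowerSeries.exp ℚ - 1) k, PowerSeries.coeff_mul,
        Finset.Nat.sum_antidiagonal_eq_sum_range_succ_mk, Finset.mul_sum]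
      apply Finset.sum_congr rfl
      intro j hj
      rw [Finset.mem_range] at hj
      have hj' : j ≤ s.card := by omega
      have hcexp : PowerSeries.coeff j (PowerSeries.exp ℚ - 1)
          = if j = 0 then 0 else (1 : ℚ) / j.factorial := by
        rw [map_sub, PowerSeries.coeff_exp, PowerSeries.coeff_one]
        by_cases h0 : j = 0
        · subst h0; simp
        · simp [h0]
      rw [hcexp]
      dsimp only
      simp only [hG]
      by_cases h0 : j = 0
      · subst h0; simp
      · rw [if_neg h0, if_neg h0]
        have hkey := Nat.choose_mul_factorial_mul_factorial hj'
        have h2 : (s.card.choose j : ℚ) * j.factorial * (s.card - j).factorial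
            = (s.card.factorial : ℚ) := by exact_mod_cast hkey
        have hjfac : (j.factorial : ℚ) ≠ 0 := Nat.cast_ne_zero.2 (Nat.factorial_ne_zero j)
        set X := PowerSeries.coeff (s.card - j) ((PowerSeries.exp ℚ - 1) ^ k)
        field_simp
        linear_combination X * h2
end OrdTuple
section C2
variable {α : Type} [DecidableEq α]

lemma ordTuple_injective {k : ℕ} {s : Finset α} (A : OrdTuple k s) :
    Function.Injective A.1 := by
  intro i j hij
  by_contra hne
  have hd : Disjoint (A.1 i) (A.1 j) := A.2.2.1 hne
  rw [hij] at hd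
  exact (A.2.1 j).ne_empty (disjoint_self.1 hd)

/-- The partition associated to an ordered tuple. -/
def tupleToPartition {k : ℕ} {s : Finset α} (A : OrdTuple k s) : Finpartition s where
  parts := Finset.univ.image A.1
  supIndep := by
    rw [Finset.supIndep_iff_pairwiseDisjoint]
    intro x hx y hy hxy
    simp only [Finset.coe_image, Set.mem_image] at hx hy
    obtain ⟨i, _, rfl⟩ := hx
    obtain ⟨j, _, rfl⟩ := hy
    exact A.2.2.1 (fun h => hxy (by rw [h]))
  sup_parts := by
    rw [Finset.sup_image]
    exact A.2.2.2
  bot_notMem := by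
    simp only [Finset.bot_eq_empty, Finset.mem_image]
    rintro ⟨i, _, hi⟩
    exact (A.2.1 i).ne_empty hi

lemma tupleTo_mem {k : ℕ} {s : Finset α} {P : Finpartition s} {A : OrdTuple k s}
    (h : tupleToPartition A = P) (i : Fin k) : A.1 i ∈ P.parts := by
  subst h; exact Finset.mem_image_of_mem _ (Finset.mem_univ i)

lemma tupleTo_surj {k : ℕ} {s : Finset α} {P : Finpartition s} {A : OrdTuple k s}
    (h : tupleToPartition A = P) {b : Finset α} (hb : b ∈ P.parts) : ∃ i, A.1 i = b := by
  subst h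
  simp only [tupleToPartition, Finset.mem_image] at hb
  obtain ⟨i, _, hi⟩ := hb
  exact ⟨i, hi⟩

noncomputable def ordTupleFiberEquiv (k : ℕ) (s : Finset α) (P : Finpartition s) :
    {A : OrdTuple k s // tupleToPartition A = P} ≃ (Fin k ≃ {x // x ∈ P.parts}) where
  toFun A :=
    Equiv.ofBijective (fun i => (⟨A.1.1 i, tupleTo_mem A.2 i⟩ : {x // x ∈ P.parts}))
      (by
        constructor
        · intro i j hij
          exact ordTuple_injective A.1 (congrArg Subtype.val hij)
        · rintro ⟨b, hb⟩
          obtain ⟨i, hi⟩ := tupleTo_surj A.2 hb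
          exact ⟨i, Subtype.ext hi⟩)
  invFun e := by
    refine ⟨⟨fun i => (e i).1, fun i => P.nonempty_of_mem_parts (e i).2, ?_, ?_⟩, ?_⟩
    · intro i j hij
      exact P.disjoint (e i).2 (e j).2 (fun h => hij (e.injective (Subtype.ext h)))
    · have hsup : (Finset.univ.sup fun i => ((e i : Finset α))) = P.parts.sup id := by
        ext x
        rw [Finset.mem_sup, Finset.mem_sup]
        constructor
        · rintro ⟨i, _, hi⟩
          exact ⟨(e i).1, ⟨(e i).2, hi⟩⟩
        · rintro ⟨b, hb, hx⟩
          obtain ⟨i, hi⟩ := e.surjective ⟨b, hb⟩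
          exact ⟨i, Finset.mem_univ i, by rw [hi]; exact hx⟩
      rw [hsup, P.sup_parts]
    · apply Finpartition.ext
      ext b
      simp only [tupleToPartition, Finset.mem_image]
      constructor
      · rintro ⟨i, _, rfl⟩
        exact (e i).2
      · intro hb
        obtain ⟨i, hi⟩ := e.surjective ⟨b, hb⟩
        exact ⟨i, Finset.mem_univ i, congrArg Subtype.val hi⟩
  left_inv := by
    intro A
    exact Subtype.ext (Subtype.ext (funext fun i => rfl))
  right_inv := by
    intro e
    apply Equiv.ext
    intro i
    exact Subtype.ext rfl

lemma natCard_equiv_fin {β : Type} [DecidableEq β] [Fintype β] (k : ℕ) :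
    Nat.card (Fin k ≃ β) = if Fintype.card β = k then k.factorial else 0 := by
  by_cases h : Fintype.card β = k
  · rw [if_pos h, Nat.card_eq_fintype_card,
      Fintype.card_equiv (Fintype.equivFinOfCardEq h).symm, Fintype.card_fin]
  · rw [if_neg h]
    haveI : IsEmpty (Fin k ≃ β) := ⟨fun e => h (by rw [← Fintype.card_congr e, Fintype.card_fin])⟩
    exact Nat.card_of_isEmpty

lemma card_ordTuple_eq_stirling [Fintype α] (k : ℕ) (s : Finset α) :
    Nat.card (OrdTuple k s) =
      k.factorial * Nat.card {P : Finpartition s // P.parts.card = k} := by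
  rw [Nat.card_congr (Equiv.sigmaFiberEquiv (tupleToPartition (k := k) (s := s))).symm,
    natCard_sigma]
  have hfib : ∀ P : Finpartition s,
      Nat.card {A : OrdTuple k s // tupleToPartition A = P}
        = if P.parts.card = k then k.factorial else 0 := by
    intro P
    rw [Nat.card_congr (ordTupleFiberEquiv k s P), natCard_equiv_fin]
    congr 1
    rw [Fintype.card_coe]
  rw [Finset.sum_congr rfl (fun P _ => hfib P)]
  rw [← Finset.sum_filter, Finset.sum_const, Nat.card_eq_fintype_card,
    Fintype.card_subtype, smul_eq_mul, mul_comm]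
end C2
section C3
variable {α β : Type} [DecidableEq α] [DecidableEq β]

/-- `Finset.map` as an embedding on finsets. -/
def finsetMapEmb (f : α ↪ β) : Finset α ↪ Finset β :=
  ⟨Finset.map f, Finset.map_injective f⟩

lemma sup_parts_map (f : α ↪ β) {s : Finset α} (P : Finpartition s) :
    (P.parts.sup fun b => b.map f) = s.map f := by
  ext x
  rw [Finset.mem_sup]
  constructor
  · rintro ⟨b, hb, hx⟩
    rw [Finset.mem_map] at hx ⊢
    obtain ⟨a, ha, rfl⟩ := hx
    exact ⟨a, P.le hb ha, rfl⟩
  · intro hx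
    rw [Finset.mem_map] at hx
    obtain ⟨a, ha, rfl⟩ := hx
    rw [← P.sup_parts, Finset.mem_sup] at ha
    obtain ⟨b, hb, hab⟩ := ha
    exact ⟨b, hb, Finset.mem_map_of_mem f hab⟩

noncomputable def finpartitionMapEquiv (f : α ↪ β) (s : Finset α) :
    Finpartition s ≃ Finpartition (s.map f) where
  toFun P :=
    { parts := P.parts.map (finsetMapEmb f)
      supIndep := by
        rw [Finset.supIndep_iff_pairwiseDisjoint]
        intro x hx y hy hxy
        simp only [Finset.coe_map, Set.mem_image, Finset.mem_coe] at hx hy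
        obtain ⟨b, hb, rfl⟩ := hx
        obtain ⟨c, hc, rfl⟩ := hy
        have hbc : b ≠ c := fun h => hxy (by rw [h])
        show Disjoint (b.map f) (c.map f)
        exact (Finset.disjoint_map f).2 (P.disjoint hb hc hbc)
      sup_parts := by
        rw [Finset.sup_map]
        exact sup_parts_map f P
      bot_notMem := by
        rw [Finset.mem_map]
        rintro ⟨b, hb, hbe⟩
        have : b = ∅ := Finset.map_eq_empty.1 hbe
        exact P.bot_notMem (by rw [Finset.bot_eq_empty, ← this]; exact hb) }
  invFun Q :=
    { parts := Q.parts.image (fun b => b.preimage f f.injective.injOn)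
      supIndep := by
        rw [Finset.supIndep_iff_pairwiseDisjoint]
        intro x hx y hy hxy
        simp only [Finset.coe_image, Set.mem_image, Finset.mem_coe] at hx hy
        obtain ⟨b, hb, rfl⟩ := hx
        obtain ⟨c, hc, rfl⟩ := hy
        have hbc : b ≠ c := fun h => hxy (by rw [h])
        have hdisj : Disjoint b c := Q.disjoint hb hc hbc
        show Disjoint (b.preimage f _) (c.preimage f _)
        rw [Finset.disjoint_left] at hdisj ⊢
        intro a ha hac
        rw [Finset.mem_preimage] at ha hac
        exact hdisj ha hac
      sup_parts := by
        ext a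
        rw [Finset.sup_image, Finset.mem_sup]
        constructor
        · rintro ⟨b, hb, hab⟩
          simp only [Function.comp_apply, id_eq, Finset.mem_preimage] at hab
          have := Q.le hb hab
          rwa [Finset.mem_map' f] at this
        · intro ha
          have : f a ∈ s.map f := Finset.mem_map_of_mem f ha
          rw [← Q.sup_parts, Finset.mem_sup] at this
          obtain ⟨b, hb, hab⟩ := this
          refine ⟨b, hb, ?_⟩
          simp only [Function.comp_apply, id_eq, Finset.mem_preimage]
          exact hab
      bot_notMem := by
        rw [Finset.mem_image]
        rintro ⟨b, hb, hbe⟩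
        obtain ⟨u, _, rfl⟩ := Finset.subset_map_iff.1 (Q.le hb)
        rw [Finset.preimage_map] at hbe
        subst hbe
        have hmapbot : Finset.map f (⊥ : Finset α) = (⊥ : Finset β) := by simp
        exact Q.bot_notMem (hmapbot ▸ hb) }
  left_inv P := by
    apply Finpartition.ext
    show (P.parts.map (finsetMapEmb f)).image _ = P.parts
    rw [Finset.map_eq_image, Finset.image_image]
    have : ((fun b => Finset.preimage b f f.injective.injOn) ∘ (finsetMapEmb f))
        = id := by
      funext b
      exact Finset.preimage_map f b
    rw [this, Finset.image_id]
  right_inv Q := by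
    apply Finpartition.ext
    show (Q.parts.image _).map (finsetMapEmb f) = Q.parts
    rw [Finset.map_eq_image, Finset.image_image]
    have : ∀ b ∈ Q.parts,
        ((finsetMapEmb f) ∘ fun b => Finset.preimage b f f.injective.injOn) b
          = id b := by
      intro b hb
      obtain ⟨u, _, rfl⟩ := Finset.subset_map_iff.1 (Q.le hb)
      show (Finset.preimage (u.map f) f _).map f = u.map f
      rw [Finset.preimage_map]
    rw [Finset.image_congr this, Finset.image_id]

lemma finpartitionMapEquiv_parts (f : α ↪ β) {s : Finset α} (P : Finpartition s) :
    (finpartitionMapEquiv f s P).parts = P.parts.map (finsetMapEmb f) := by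
  simp only [finpartitionMapEquiv, Equiv.coe_fn_mk]

noncomputable def hyperMapEquiv : (m : ℕ) → {α β : Type} → [DecidableEq α] → [DecidableEq β] →
    (f : α ↪ β) → (s : Finset α) → HyperPartition m s ≃ HyperPartition m (s.map f)
  | 0, _, _, _, _, _, _ => Equiv.refl PUnit
  | m+1, α, β, _, _, f, s =>
      Equiv.sigmaCongr (finpartitionMapEquiv f s) (fun P =>
        (hyperMapEquiv m (finsetMapEmb f) P.parts).trans
          (Equiv.cast (congrArg (HyperPartition m)
            (finpartitionMapEquiv_parts f P).symm)))

lemma outer_cast {m : ℕ} {s t : Finset α} (h : s = t) (p : HyperPartition m s) :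
    HyperPartition.outerBlocks m (cast (congrArg (HyperPartition m) h) p)
      = HyperPartition.outerBlocks m p := by
  subst h; rfl

lemma outer_hyperMapEquiv : ∀ (m : ℕ) {α β : Type} [DecidableEq α] [DecidableEq β]
    (f : α ↪ β) (s : Finset α) (p : HyperPartition m s),
    HyperPartition.outerBlocks m (hyperMapEquiv m f s p) = HyperPartition.outerBlocks m p
  | 0, α, β, _, _, f, s, p => by
      show (s.map f).card = s.card
      exact Finset.card_map f
  | 1, α, β, _, _, f, s, p => by
      obtain ⟨P, q⟩ := p
      show ((finpartitionMapEquiv f s P)).parts.card = P.parts.card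
      rw [finpartitionMapEquiv_parts, Finset.card_map]
  | (m+2), α, β, _, _, f, s, p => by
      obtain ⟨P, q⟩ := p
      show HyperPartition.outerBlocks (m+1)
          (cast (congrArg (HyperPartition (m+1)) (finpartitionMapEquiv_parts f P).symm)
            (hyperMapEquiv (m+1) (finsetMapEmb f) P.parts q))
        = HyperPartition.outerBlocks (m+1) q
      rw [outer_cast (finpartitionMapEquiv_parts f P).symm]
      exact outer_hyperMapEquiv (m+1) (finsetMapEmb f) P.parts q

instance hyperFinite : ∀ (m : ℕ) {α : Type} [DecidableEq α] (s : Finset α),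
    Finite (HyperPartition m s)
  | 0, α, _, s => Finite.of_equiv PUnit (Equiv.refl PUnit)
  | (m+1), α, _, s =>
      haveI : ∀ P : Finpartition s, Finite (HyperPartition m P.parts) :=
        fun P => hyperFinite m P.parts
      Finite.of_equiv ((P : Finpartition s) × HyperPartition m P.parts) (Equiv.refl _)

noncomputable def finEmbOfFinset {γ : Type} [DecidableEq γ] (s : Finset γ) :
    Fin s.card ↪ γ :=
  ⟨fun i => (s.equivFin.symm i).1, fun i j hij =>
    s.equivFin.symm.injective (Subtype.ext hij)⟩

lemma map_univ_finEmbOfFinset {γ : Type} [DecidableEq γ] (s : Finset γ) :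
    (Finset.univ : Finset (Fin s.card)).map (finEmbOfFinset s) = s := by
  ext x
  simp only [Finset.mem_map, Finset.mem_univ, true_and]
  constructor
  · rintro ⟨i, rfl⟩
    exact (s.equivFin.symm i).2
  · intro hx
    refine ⟨s.equivFin ⟨x, hx⟩, ?_⟩
    show (s.equivFin.symm (s.equivFin ⟨x, hx⟩)).1 = x
    rw [Equiv.symm_apply_apply]

lemma natCard_hyper_outer (m : ℕ) {γ : Type} [DecidableEq γ]
    (s : Finset γ) (k : ℕ) :
    Nat.card {p : HyperPartition m s // HyperPartition.outerBlocks m p = k}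
      = hyperStirling m s.card k := by
  rw [hyperStirling]
  apply Nat.card_congr
  apply Equiv.symm
  have hmap := map_univ_finEmbOfFinset s
  refine Equiv.subtypeEquiv
    ((hyperMapEquiv m (finEmbOfFinset s) Finset.univ).trans
      (Equiv.cast (congrArg (HyperPartition m) hmap))) ?_
  intro p
  rw [Equiv.trans_apply, Equiv.cast_apply, outer_cast hmap, outer_hyperMapEquiv]
end C3
section C4

lemma outer_succ (m : ℕ) {α : Type} [DecidableEq α] {s : Finset α}
    (P : Finpartition s) (q : HyperPartition m P.parts) :
    HyperPartition.outerBlocks (m+1) ⟨P, q⟩ = HyperPartition.outerBlocks m q := by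
  cases m with
  | zero => rfl
  | succ m => rfl

lemma outer_le : ∀ (m : ℕ) {α : Type} [DecidableEq α] (s : Finset α)
    (p : HyperPartition m s), HyperPartition.outerBlocks m p ≤ s.card
  | 0, α, _, s, p => le_refl _
  | 1, α, _, s, p => p.1.card_parts_le_card
  | (m+2), α, _, s, p => by
      obtain ⟨P, q⟩ := p
      show HyperPartition.outerBlocks (m+1) q ≤ s.card
      exact le_trans (outer_le (m+1) P.parts q) P.card_parts_le_card

lemma hyperStirling_eq_zero {m n k : ℕ} (h : n < k) : hyperStirling m n k = 0 := by
  rw [hyperStirling]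
  haveI : IsEmpty {p : HyperPartition m (Finset.univ : Finset (Fin n)) //
      HyperPartition.outerBlocks m p = k} := ⟨by
    rintro ⟨p, hp⟩
    have := outer_le m (Finset.univ : Finset (Fin n)) p
    rw [hp, Finset.card_univ, Fintype.card_fin] at this
    omega⟩
  exact Nat.card_of_isEmpty

lemma hyperStirling_one (n k : ℕ) : hyperStirling 1 n k = stirling n k := by
  rw [hyperStirling, stirling]
  apply Nat.card_congr
  exact {
    toFun := fun p => ⟨p.1.1, p.2⟩
    invFun := fun P => ⟨⟨P.1, PUnit.unit⟩, P.2⟩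
    left_inv := fun p => rfl
    right_inv := fun P => rfl }

lemma stirling_eq_card (n k : ℕ) :
    stirling n k = (Finset.univ.filter
      (fun P : Finpartition (Finset.univ : Finset (Fin n)) => P.parts.card = k)).card := by
  rw [stirling, Nat.card_eq_fintype_card, Fintype.card_subtype]

lemma hyperStirling_succ (m n k : ℕ) :
    hyperStirling (m+1) n k
      = ∑ j ∈ Finset.range (n+1), stirling n j * hyperStirling m j k := by
  rw [hyperStirling]
  have e : {p : HyperPartition (m+1) (Finset.univ : Finset (Fin n)) //
        HyperPartition.outerBlocks (m+1) p = k}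
      ≃ Σ P : Finpartition (Finset.univ : Finset (Fin n)),
          {q : HyperPartition m P.parts // HyperPartition.outerBlocks m q = k} := {
    toFun := fun p => ⟨p.1.1, ⟨p.1.2, by rw [← outer_succ m p.1.1 p.1.2]; exact p.2⟩⟩
    invFun := fun x => ⟨⟨x.1, x.2.1⟩, by rw [outer_succ]; exact x.2.2⟩
    left_inv := fun p => rfl
    right_inv := fun x => rfl }
  rw [Nat.card_congr e, natCard_sigma]
  have hval : ∀ P : Finpartition (Finset.univ : Finset (Fin n)),
      Nat.card {q : HyperPartition m P.parts // HyperPartition.outerBlocks m q = k}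
        = hyperStirling m P.parts.card k := by
    intro P
    exact natCard_hyper_outer m P.parts k
  rw [Finset.sum_congr rfl (fun P _ => hval P)]
  rw [← Finset.sum_fiberwise_of_maps_to
    (g := fun P : Finpartition (Finset.univ : Finset (Fin n)) => P.parts.card)
    (t := Finset.range (n+1))
    (fun P _ => by
      show P.parts.card ∈ Finset.range (n+1)
      rw [Finset.mem_range]
      have := P.card_parts_le_card
      rw [Finset.card_univ, Fintype.card_fin] at this
      omega)]
  apply Finset.sum_congr rfl
  intro j _
  have hstep : ∀ P ∈ Finset.filter
      (fun P : Finpartition (Finset.univ : Finset (Fin n)) => P.parts.card = j) Finset.univ,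
      hyperStirling m P.parts.card k = hyperStirling m j k := fun P hP => by
    rw [(Finset.mem_filter.1 hP).2]
  rw [Finset.sum_congr rfl hstep, Finset.sum_const, stirling_eq_card, smul_eq_mul]
end C4
section Assembly

lemma base_coeff (n k : ℕ) :
    PowerSeries.coeff n ((PowerSeries.exp ℚ - 1) ^ k)
      = (k.factorial : ℚ) * hyperStirling 1 n k / n.factorial := by
  have h1 := card_ordTuple k (Finset.univ : Finset (Fin n))
  have h2 := card_ordTuple_eq_stirling k (Finset.univ : Finset (Fin n))
  rw [Finset.card_univ, Fintype.card_fin] at h1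
  rw [h2] at h1
  rw [show Nat.card {P : Finpartition (Finset.univ : Finset (Fin n)) // P.parts.card = k}
      = stirling n k from rfl] at h1
  rw [← hyperStirling_one n k] at h1
  push_cast at h1
  have hn : (n.factorial : ℚ) ≠ 0 := Nat.cast_ne_zero.2 (Nat.factorial_ne_zero n)
  field_simp
  linarith [h1]

lemma main_coeff : ∀ (m' : ℕ), ∀ (k n : ℕ), 1 ≤ k →
    (k.factorial : ℚ)⁻¹ * PowerSeries.coeff n ((E m' - 1) ^ k)
      = (hyperStirling (m'+1) n k : ℚ) / n.factorial := by
  intro m'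
  induction m' with
  | zero =>
      intro k n _
      show (k.factorial : ℚ)⁻¹ * PowerSeries.coeff n ((PowerSeries.exp ℚ - 1) ^ k) = _
      rw [base_coeff]
      have hk : (k.factorial : ℚ) ≠ 0 := Nat.cast_ne_zero.2 (Nat.factorial_ne_zero k)
      field_simp
  | succ m' ih =>
      intro k n hk
      have hkf : (k.factorial : ℚ) ≠ 0 := Nat.cast_ne_zero.2 (Nat.factorial_ne_zero k)
      have hnf : (n.factorial : ℚ) ≠ 0 := Nat.cast_ne_zero.2 (Nat.factorial_ne_zero n)
      rw [E_pow_key, coeff_psComp]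
      have hterm : ∀ j ∈ Finset.range (n+1),
          PowerSeries.coeff j ((E m' - 1) ^ k)
              * PowerSeries.coeff n ((PowerSeries.exp ℚ - 1) ^ j)
            = (k.factorial : ℚ) * ((stirling n j : ℚ) * hyperStirling (m'+1) j k / n.factorial) := by
        intro j _
        have hjf : (j.factorial : ℚ) ≠ 0 := Nat.cast_ne_zero.2 (Nat.factorial_ne_zero j)
        have hIH := ih k j hk
        have hcoeffj : PowerSeries.coeff j ((E m' - 1) ^ k)
            = (k.factorial : ℚ) * ((hyperStirling (m'+1) j k : ℚ) / j.factorial) := by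
          rw [← hIH, ← mul_assoc, mul_inv_cancel₀ hkf, one_mul]
        rw [hcoeffj, base_coeff, hyperStirling_one]
        field_simp
      rw [Finset.sum_congr rfl hterm, ← Finset.mul_sum, ← mul_assoc,
        inv_mul_cancel₀ hkf, one_mul, hyperStirling_succ]
      rw [← Finset.sum_div]
      push_cast
      rfl

theorem stmt6' (m k : ℕ) (hm : 1 ≤ m) (hk : 1 ≤ k) :
    (PowerSeries.mk fun n =>
        if k ≤ n then (hyperStirling m n k : ℚ) / n.factorial else 0) =
      (k.factorial : ℚ)⁻¹ • (E (m - 1) - 1) ^ k := by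
  obtain ⟨m', rfl⟩ : ∃ m', m = m' + 1 := ⟨m - 1, (Nat.succ_pred_eq_of_pos hm).symm⟩
  ext n
  rw [PowerSeries.coeff_mk, map_smul, smul_eq_mul]
  rw [show m' + 1 - 1 = m' from rfl, main_coeff m' k n hk]
  by_cases h : k ≤ n
  · rw [if_pos h]
  · rw [if_neg h, hyperStirling_eq_zero (by omega)]
    simp
end Assembly

/-- `Σ_{n≥k} S^(m)(n,k) xⁿ/n! = (E_{m−1}(x) − 1)^k / k!` as formal power
series over `ℚ`; i.e. `S^(m)(n,k)` coincides with Bell's generalized Stirling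
number `ζₙ^(k,m)`. -/
theorem stmt6 (m k : ℕ) (hm : 1 ≤ m) (hk : 1 ≤ k) :
    (PowerSeries.mk fun n =>
        if k ≤ n then (hyperStirling m n k : ℚ) / n.factorial else 0) =
      (k.factorial : ℚ)⁻¹ • (E (m - 1) - 1) ^ k :=
  stmt6' m k hm hk
end

section
/- For every fixed n ≥ 1, there exist rational numbers c_0, c_1, …, c_{n−1}, independent of m, such that for all m ≥ 0 the m-th order Bell number satisfies B_n^(m) = c_{n−1} m^{n−1} + c_{n−2} m^{n−2} + ⋯ + c_0; that is, m ↦ B_n^(m) is a polynomial in m of degree at most n−1 with rational coefficients. -/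
open PowerSeries Polynomial Finset in
lemma coeff_zero_E (m : ℕ) : PowerSeries.coeff 0 (E m) = 1 := by
  induction m with
  | zero => simp [E, coeff_exp]
  | succ m ih =>
      show PowerSeries.coeff 0 (psComp (PowerSeries.exp ℚ) (E m - 1)) = 1
      unfold psComp
      rw [PowerSeries.coeff_mk]
      simp [coeff_exp]

open PowerSeries Polynomial Finset

lemma coeff_zero_Esub (m : ℕ) : PowerSeries.coeff 0 (E m - 1) = 0 := by
  rw [map_sub, coeff_zero_E, PowerSeries.coeff_one]; simp

lemma coeff_pow_E_zero (m : ℕ) : ∀ i k : ℕ, k < i →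
    PowerSeries.coeff k ((E m - 1) ^ i) = 0 := by
  intro i
  induction i with
  | zero => omega
  | succ i ih =>
      intro k hk
      rw [pow_succ, PowerSeries.coeff_mul]
      refine Finset.sum_eq_zero fun p hp => ?_
      rw [Finset.HasAntidiagonal.mem_antidiagonal] at hp
      rcases Nat.eq_zero_or_pos p.2 with h2 | h2
      · rw [h2, coeff_zero_Esub, mul_zero]
      · rw [ih p.1 (by omega), zero_mul]

lemma exists_rep_sum {ι : Type*} (s : Finset ι) (d : ℕ) (F : ι → ℕ → ℚ)
    (h : ∀ p ∈ s, ∃ q : Polynomial ℚ, q.degree ≤ (d : ℕ) ∧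
      ∀ m : ℕ, F p m = q.eval (m : ℚ)) :
    ∃ q : Polynomial ℚ, q.degree ≤ (d : ℕ) ∧
      ∀ m : ℕ, (∑ p ∈ s, F p m) = q.eval (m : ℚ) := by
  classical
  induction s using Finset.induction with
  | empty => exact ⟨0, by simp, by simp⟩
  | @insert a s hnot ih =>
      obtain ⟨q1, hd1, he1⟩ := h a (Finset.mem_insert_self a s)
      obtain ⟨q2, hd2, he2⟩ := ih fun p hp => h p (Finset.mem_insert_of_mem hp)
      exact ⟨q1 + q2, le_trans (Polynomial.degree_add_le _ _) (max_le hd1 hd2),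
        fun m => by rw [Finset.sum_insert hnot, he1 m, he2 m, Polynomial.eval_add]⟩

lemma exists_rep_powsum (p : ℕ) :
    ∃ r : Polynomial ℚ, r.degree ≤ ((p + 1 : ℕ) : WithBot ℕ) ∧
      ∀ m : ℕ, (∑ j ∈ Finset.range m, (j : ℚ) ^ p) = r.eval (m : ℚ) := by
  refine ⟨∑ l ∈ Finset.range (p + 1),
    Polynomial.C (_root_.bernoulli l * ((p + 1).choose l) / (p + 1)) * Polynomial.X ^ (p + 1 - l),
    ?_, ?_⟩
  · refine le_trans (Polynomial.degree_sum_le _ _) (Finset.sup_le fun l _ => ?_)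
    exact le_trans (Polynomial.degree_C_mul_X_pow_le _ _)
      (by exact_mod_cast Nat.cast_le.2 (Nat.sub_le _ _))
  · intro m
    rw [sum_range_pow m p, Polynomial.eval_finset_sum]
    refine Finset.sum_congr rfl fun l _ => ?_
    simp [div_mul_eq_mul_div]

lemma sum_of_poly (q : Polynomial ℚ) (d : ℕ) (hd : q.degree ≤ (d : ℕ)) :
    ∃ r : Polynomial ℚ, r.degree ≤ ((d + 1 : ℕ) : WithBot ℕ) ∧
      ∀ m : ℕ, (∑ j ∈ Finset.range m, q.eval (j : ℚ)) = r.eval (m : ℚ) := by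
  have hnat : q.natDegree < d + 1 :=
    Nat.lt_succ_of_le (Polynomial.natDegree_le_iff_degree_le.2 hd)
  have key : ∀ m : ℕ, (∑ j ∈ Finset.range m, q.eval (j : ℚ)) =
      ∑ i ∈ Finset.range (d + 1), (q.coeff i * ∑ j ∈ Finset.range m, (j : ℚ) ^ i) := by
    intro m
    calc ∑ j ∈ Finset.range m, q.eval (j : ℚ)
        = ∑ j ∈ Finset.range m, ∑ i ∈ Finset.range (d + 1), q.coeff i * (j : ℚ) ^ i :=
          Finset.sum_congr rfl fun j _ => Polynomial.eval_eq_sum_range' hnat _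
      _ = ∑ i ∈ Finset.range (d + 1), ∑ j ∈ Finset.range m, q.coeff i * (j : ℚ) ^ i :=
          Finset.sum_comm
      _ = ∑ i ∈ Finset.range (d + 1), q.coeff i * ∑ j ∈ Finset.range m, (j : ℚ) ^ i :=
          Finset.sum_congr rfl fun i _ => (Finset.mul_sum _ _ _).symm
  obtain ⟨r, hr, he⟩ := exists_rep_sum (Finset.range (d + 1)) (d + 1)
    (fun i m => q.coeff i * ∑ j ∈ Finset.range m, (j : ℚ) ^ i) (fun i hi => by
      obtain ⟨ri, hri, hei⟩ := exists_rep_powsum i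
      refine ⟨Polynomial.C (q.coeff i) * ri, ?_, fun m => by
        rw [hei m, Polynomial.eval_mul, Polynomial.eval_C]⟩
      refine le_trans (Polynomial.degree_mul_le _ _) ?_
      have h1 : (i : ℕ) + 1 ≤ d + 1 := by
        rw [Finset.mem_range] at hi; omega
      calc (Polynomial.C (q.coeff i)).degree + ri.degree ≤ 0 + ((i + 1 : ℕ) : WithBot ℕ) :=
            add_le_add Polynomial.degree_C_le hri
        _ = ((i + 1 : ℕ) : WithBot ℕ) := zero_add _
        _ ≤ ((d + 1 : ℕ) : WithBot ℕ) := by exact_mod_cast Nat.cast_le.2 h1)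
  exact ⟨r, hr, fun m => by rw [key m, he m]⟩

lemma claim_pow (n : ℕ)
    (IH : ∀ j, 1 ≤ j → j < n → ∃ q : Polynomial ℚ, q.degree ≤ ((j - 1 : ℕ) : WithBot ℕ) ∧
      ∀ m : ℕ, PowerSeries.coeff j (E m) = q.eval (m : ℚ)) :
    ∀ i k : ℕ, 1 ≤ i → k ≤ n → (i = 1 → k < n) →
      ∃ q : Polynomial ℚ, q.degree ≤ ((k - i : ℕ) : WithBot ℕ) ∧
        ∀ m : ℕ, PowerSeries.coeff k ((E m - 1) ^ i) = q.eval (m : ℚ) := by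
  intro i
  induction i with
  | zero => omega
  | succ i ih =>
      intro k h1 hk hlt
      rcases Nat.eq_zero_or_pos i with hi0 | hi1
      · -- i + 1 = 1 case
        subst hi0
        have hkn : k < n := hlt rfl
        rcases Nat.eq_zero_or_pos k with hk0 | hk1
        · subst hk0
          exact ⟨0, by simp, fun m => by rw [pow_one, coeff_zero_Esub]; simp⟩
        · obtain ⟨q, hq, he⟩ := IH k hk1 hkn
          refine ⟨q, hq, fun m => ?_⟩
          rw [pow_one, map_sub, PowerSeries.coeff_one, if_neg (by omega), sub_zero, he m]
      · -- i ≥ 1 step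
        have hrec : ∀ m : ℕ, PowerSeries.coeff k ((E m - 1) ^ (i + 1)) =
            ∑ p ∈ Finset.HasAntidiagonal.antidiagonal k,
              PowerSeries.coeff p.1 ((E m - 1) ^ i) * PowerSeries.coeff p.2 (E m - 1) := by
          intro m; rw [pow_succ, PowerSeries.coeff_mul]
        have hyp : ∀ p ∈ Finset.HasAntidiagonal.antidiagonal k,
            ∃ q : Polynomial ℚ, q.degree ≤ ((k - (i + 1) : ℕ) : WithBot ℕ) ∧
              ∀ m : ℕ, PowerSeries.coeff p.1 ((E m - 1) ^ i) *
                PowerSeries.coeff p.2 (E m - 1) = q.eval (m : ℚ) := by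
          intro p hp
          rw [Finset.HasAntidiagonal.mem_antidiagonal] at hp
          rcases Nat.eq_zero_or_pos p.2 with h2 | h2
          · exact ⟨0, by simp, fun m => by rw [h2, coeff_zero_Esub, mul_zero]; simp⟩
          rcases Nat.lt_or_ge p.1 i with hlt1 | hge1
          · exact ⟨0, by simp, fun m => by
              rw [coeff_pow_E_zero m i p.1 hlt1, zero_mul]; simp⟩
          · -- p.1 ≥ i ≥ 1, p.2 ≥ 1
            obtain ⟨q1, hq1, he1⟩ := ih p.1 hi1 (by omega) (fun h => by omega)
            have hp2n : p.2 < n := by omega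
            obtain ⟨q2, hq2, he2⟩ := IH p.2 h2 hp2n
            refine ⟨q1 * q2, ?_, fun m => ?_⟩
            · refine le_trans (Polynomial.degree_mul_le _ _) ?_
              calc q1.degree + q2.degree
                  ≤ ((p.1 - i : ℕ) : WithBot ℕ) + ((p.2 - 1 : ℕ) : WithBot ℕ) :=
                    add_le_add hq1 hq2
                _ = (((p.1 - i) + (p.2 - 1) : ℕ) : WithBot ℕ) := by
                    rw [Nat.cast_add]
                _ = ((k - (i + 1) : ℕ) : WithBot ℕ) := by congr 1; omega
            · rw [Polynomial.eval_mul, ← he1 m, ← he2 m, map_sub, PowerSeries.coeff_one,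
                if_neg (by omega), sub_zero]
        obtain ⟨q, hq, he⟩ := exists_rep_sum (Finset.HasAntidiagonal.antidiagonal k) (k - (i + 1))
          (fun p m => PowerSeries.coeff p.1 ((E m - 1) ^ i) *
            PowerSeries.coeff p.2 (E m - 1)) hyp
        exact ⟨q, hq, fun m => by rw [hrec m, he m]⟩

lemma coeff_E_succ (n : ℕ) (hn : 1 ≤ n) (m : ℕ) :
    PowerSeries.coeff n (E (m + 1)) = PowerSeries.coeff n (E m) +
      ∑ i ∈ Finset.Ico 2 (n + 1),
        (PowerSeries.coeff i (PowerSeries.exp ℚ)) *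
          PowerSeries.coeff n ((E m - 1) ^ i) := by
  have step1 : PowerSeries.coeff n (E (m + 1)) =
      ∑ i ∈ Finset.range (n + 1),
        (PowerSeries.coeff i (PowerSeries.exp ℚ)) *
          PowerSeries.coeff n ((E m - 1) ^ i) := by
    show PowerSeries.coeff n (psComp (PowerSeries.exp ℚ) (E m - 1)) = _
    unfold psComp
    rw [PowerSeries.coeff_mk, map_sum]
    exact Finset.sum_congr rfl fun i _ => PowerSeries.coeff_C_mul _ _ _
  rw [step1, Finset.range_eq_Ico,
    ← Finset.sum_Ico_consecutive _ (by omega : 0 ≤ 2) (by omega : 2 ≤ n + 1)]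
  congr 1
  have h02 : Finset.Ico 0 2 = {0, 1} := by decide
  rw [h02, Finset.sum_insert (by decide), Finset.sum_singleton]
  rw [pow_zero, pow_one, PowerSeries.coeff_one, if_neg (by omega), mul_zero, zero_add]
  rw [map_sub, PowerSeries.coeff_one, if_neg (by omega), sub_zero, PowerSeries.coeff_exp]
  norm_num

lemma main_rep : ∀ n : ℕ, 1 ≤ n →
    ∃ q : Polynomial ℚ, q.degree ≤ ((n - 1 : ℕ) : WithBot ℕ) ∧
      ∀ m : ℕ, PowerSeries.coeff n (E m) = q.eval (m : ℚ) := by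
  intro n
  induction n using Nat.strong_induction_on with
  | _ n IHn =>
    intro hn
    rcases Nat.lt_or_ge n 2 with hn2 | hn2
    · -- n = 1 : coeff is constant in m
      have hn1 : n = 1 := by omega
      subst hn1
      refine ⟨Polynomial.C (PowerSeries.coeff 1 (E 0)), by simp [Polynomial.degree_C_le],
        fun m => ?_⟩
      rw [Polynomial.eval_C]
      induction m with
      | zero => rfl
      | succ m ihm =>
          rw [coeff_E_succ 1 (by omega) m, ihm]
          simp
    · -- n ≥ 2
      have IH : ∀ j, 1 ≤ j → j < n →
          ∃ q : Polynomial ℚ, q.degree ≤ ((j - 1 : ℕ) : WithBot ℕ) ∧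
            ∀ m : ℕ, PowerSeries.coeff j (E m) = q.eval (m : ℚ) :=
        fun j h1 h2 => IHn j h2 h1
      -- q_delta represents the difference function
      have hyp : ∀ i ∈ Finset.Ico 2 (n + 1),
          ∃ q : Polynomial ℚ, q.degree ≤ ((n - 2 : ℕ) : WithBot ℕ) ∧
            ∀ m : ℕ, (PowerSeries.coeff i (PowerSeries.exp ℚ)) *
              PowerSeries.coeff n ((E m - 1) ^ i) = q.eval (m : ℚ) := by
        intro i hi
        rw [Finset.mem_Ico] at hi
        obtain ⟨qi, hqi, hei⟩ := claim_pow n IH i n (by omega) le_rfl (by omega)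
        refine ⟨Polynomial.C (PowerSeries.coeff i (PowerSeries.exp ℚ)) * qi, ?_, fun m => by
          rw [hei m, Polynomial.eval_mul, Polynomial.eval_C]⟩
        refine le_trans (Polynomial.degree_mul_le _ _) ?_
        calc (Polynomial.C (PowerSeries.coeff i (PowerSeries.exp ℚ))).degree + qi.degree
            ≤ 0 + ((n - i : ℕ) : WithBot ℕ) := add_le_add Polynomial.degree_C_le hqi
          _ = ((n - i : ℕ) : WithBot ℕ) := zero_add _
          _ ≤ ((n - 2 : ℕ) : WithBot ℕ) := by
              exact_mod_cast Nat.cast_le.2 (by omega : n - i ≤ n - 2)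
      obtain ⟨qd, hqd, hed⟩ := exists_rep_sum (Finset.Ico 2 (n + 1)) (n - 2)
        (fun i m => (PowerSeries.coeff i (PowerSeries.exp ℚ)) *
          PowerSeries.coeff n ((E m - 1) ^ i)) hyp
      obtain ⟨r, hr, her⟩ := sum_of_poly qd (n - 2) hqd
      refine ⟨Polynomial.C (PowerSeries.coeff n (E 0)) + r, ?_, fun m => ?_⟩
      · refine le_trans (Polynomial.degree_add_le _ _) (max_le ?_ ?_)
        · exact le_trans Polynomial.degree_C_le (by exact_mod_cast bot_le.trans (Nat.cast_le.2 (by omega : 0 ≤ n - 1)))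
        · exact le_trans hr (by exact_mod_cast Nat.cast_le.2 (by omega : n - 2 + 1 ≤ n - 1))
      · have tele : PowerSeries.coeff n (E m) = PowerSeries.coeff n (E 0) +
            ∑ j ∈ Finset.range m,
              (PowerSeries.coeff n (E (j + 1)) - PowerSeries.coeff n (E j)) := by
          rw [Finset.sum_range_sub (fun j => PowerSeries.coeff n (E j))]
          ring
        rw [tele, Polynomial.eval_add, Polynomial.eval_C, ← her m]
        congr 1
        refine Finset.sum_congr rfl fun j _ => ?_
        rw [coeff_E_succ n (by omega) j, hed j]
        ring

/-- for fixed `n ≥ 1`, `m ↦ Bₙ^(m)` is a polynomial in `m` of degree at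
most `n − 1` with rational coefficients independent of `m`. -/

theorem stmt15 (n : ℕ) (hn : 1 ≤ n) :
    ∃ c : ℕ → ℚ, ∀ m : ℕ, bell m n = ∑ i ∈ Finset.range n, c i * (m : ℚ) ^ i := by
  obtain ⟨q, hq, he⟩ := main_rep n hn
  have hnat : q.natDegree < n := by
    have := Polynomial.natDegree_le_iff_degree_le.2 hq
    omega
  refine ⟨fun i => (n.factorial : ℚ) * q.coeff i, fun m => ?_⟩
  rw [bell, he m, Polynomial.eval_eq_sum_range' hnat, Finset.mul_sum]
  exact Finset.sum_congr rfl fun i _ => by ring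
end
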